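/- Let L be any of the modal systems K_nD, D_nD, T_nD, K45_nD, KD45_nD, S5_nD, let φ be a formula of L_D, let k ≥ dep(φ), and let P be the set of atoms occurring in φ. Then there exists a unique set Φ ⊆ D^P_k(L) such that φ ≡_L ⋁Φ. -/

import Mathlib

/-!
Common framework: multi-agent epistemic modal logic with distributed knowledge.
Agents are `Fin n`, atoms are natural numbers.
-/

namespace DKLogic

/-- Formulas of the language `L_D`: atoms, negation, conjunction, disjunction and the
distributed-knowledge modality `D_B` for nonempty sets `B` of agents (together with the
constants `⊤`/`⊥`, which the paper uses as the empty conjunction/disjunction). -/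
inductive Formula (n : ℕ) : Type
  | top : Formula n
  | bot : Formula n
  | atom : ℕ → Formula n
  | neg : Formula n → Formula n
  | and : Formula n → Formula n → Formula n
  | or : Formula n → Formula n → Formula n
  | D : {B : Finset (Fin n) // B.Nonempty} → Formula n → Formula n

namespace Formula

/-- Modal depth of a formula. -/
def depth {n : ℕ} : Formula n → ℕ
  | top => 0
  | bot => 0
  | atom _ => 0
  | neg φ => depth φ
  | and φ ψ => max (depth φ) (depth ψ)
  | or φ ψ => max (depth φ) (depth ψ)
  | D _ φ => depth φ + 1

/-- The atoms occurring in a formula. -/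
def atoms {n : ℕ} : Formula n → Finset ℕ
  | top => ∅
  | bot => ∅
  | atom q => {q}
  | neg φ => atoms φ
  | and φ ψ => atoms φ ∪ atoms ψ
  | or φ ψ => atoms φ ∪ atoms ψ
  | D _ φ => atoms φ

end Formula

/-- A Kripke model over world type `W` with `n` agents. -/
structure KModel (n : ℕ) (W : Type) where
  R : Fin n → W → W → Prop
  V : W → Set ℕ

/-- The distributed accessibility relation `R_B = ⋂_{i ∈ B} R_i`. -/
def KModel.RB {n : ℕ} {W : Type} (M : KModel n W) (B : Finset (Fin n)) (s t : W) : Prop :=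
  ∀ i ∈ B, M.R i s t

/-- Satisfaction. -/
def Sat {n : ℕ} {W : Type} (M : KModel n W) : W → Formula n → Prop
  | _, .top => True
  | _, .bot => False
  | s, .atom q => q ∈ M.V s
  | s, .neg φ => ¬ Sat M s φ
  | s, .and φ ψ => Sat M s φ ∧ Sat M s ψ
  | s, .or φ ψ => Sat M s φ ∨ Sat M s ψ
  | s, .D B φ => ∀ t : W, M.RB B.1 s t → Sat M t φ

/-- Seriality of a relation. -/
def Serial {W : Type} (R : W → W → Prop) : Prop := ∀ x, ∃ y, R x y

/-- Euclideanness of a relation. -/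
def Euclidean {W : Type} (R : W → W → Prop) : Prop := ∀ x y z, R x y → R x z → R y z

/-- The six modal systems. -/
inductive MSys : Type
  | K | D | T | K45 | KD45 | S5

/-- `L`-models: frame conditions on each accessibility relation for each system. -/
def IsModel {n : ℕ} {W : Type} : MSys → KModel n W → Prop
  | .K, _ => True
  | .D, M => ∀ i, Serial (M.R i)
  | .T, M => ∀ i, Reflexive (M.R i)
  | .K45, M => ∀ i, Transitive (M.R i) ∧ Euclidean (M.R i)
  | .KD45, M => ∀ i, Serial (M.R i) ∧ Transitive (M.R i) ∧ Euclidean (M.R i)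
  | .S5, M => ∀ i, Reflexive (M.R i) ∧ Transitive (M.R i) ∧ Euclidean (M.R i)

/-- Semantic consequence over `L`-models. -/
def Entails {n : ℕ} (L : MSys) (φ ψ : Formula n) : Prop :=
  ∀ (W : Type) (M : KModel n W), IsModel L M → ∀ s : W, Sat M s φ → Sat M s ψ

/-- Semantic equivalence over `L`-models. -/
def EquivL {n : ℕ} (L : MSys) (φ ψ : Formula n) : Prop :=
  Entails L φ ψ ∧ Entails L ψ φ

/-- `L`-satisfiability. -/
def SatL {n : ℕ} (L : MSys) (φ : Formula n) : Prop :=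
  ∃ (W : Type) (M : KModel n W) (s : W), IsModel L M ∧ Sat M s φ

/-- Collective `p`-bisimulation between two pointed models. -/
def CollPBisim {n : ℕ} {W W' : Type} (M : KModel n W) (s : W) (M' : KModel n W') (s' : W')
    (p : ℕ) : Prop :=
  ∃ ρ : W → W' → Prop, ρ s s' ∧
    ∀ u u', ρ u u' →
      ((∀ q : ℕ, q ≠ p → (q ∈ M.V u ↔ q ∈ M'.V u')) ∧
       (∀ B : Finset (Fin n), B.Nonempty → ∀ v, M.RB B u v → ∃ v', M'.RB B u' v' ∧ ρ v v') ∧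
       (∀ B : Finset (Fin n), B.Nonempty → ∀ v', M'.RB B u' v' → ∃ v, M.RB B u v ∧ ρ v v'))

/-- `ψ` is a result of forgetting `p` in `φ` in system `L`
(written `dforget_L(φ,p) ≡_L ψ` in the paper). -/
def IsForget {n : ℕ} (L : MSys) (φ : Formula n) (p : ℕ) (ψ : Formula n) : Prop :=
  ψ.atoms ⊆ φ.atoms.erase p ∧
  (∀ (W W' : Type) (M : KModel n W) (M' : KModel n W') (s : W) (s' : W'),
      IsModel L M → IsModel L M' → Sat M s φ → CollPBisim M s M' s' p → Sat M' s' ψ) ∧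
  (∀ (W' : Type) (M' : KModel n W') (s' : W'),
      IsModel L M' → Sat M' s' ψ →
      ∃ (W : Type) (M : KModel n W) (s : W), IsModel L M ∧ Sat M s φ ∧ CollPBisim M s M' s' p)

/-- `L` is closed under forgetting: `dforget_L(φ,p)` exists (as an `L`-satisfiable formula)
for every `L`-satisfiable `φ` and every atom `p`. -/
def ClosedUnderForgetting {n : ℕ} (L : MSys) : Prop :=
  ∀ (φ : Formula n) (p : ℕ), SatL L φ → ∃ ψ : Formula n, SatL L ψ ∧ IsForget L φ p ψ

/-- `ψ` is a uniform interpolant of `φ` in `L` over `P \ {p}`. -/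
def IsUI {n : ℕ} (L : MSys) (P : Finset ℕ) (p : ℕ) (φ ψ : Formula n) : Prop :=
  SatL L ψ ∧ ψ.atoms ⊆ P.erase p ∧
  ∀ χ : Formula n, p ∉ χ.atoms → (Entails L φ χ ↔ Entails L ψ χ)

/-- The uniform interpolation property for the system `L`. -/
def HasUIP {n : ℕ} (L : MSys) : Prop :=
  ∀ (P : Finset ℕ) (p : ℕ) (φ : Formula n),
    p ∈ P → φ.atoms ⊆ P → SatL L φ → ∃ ψ : Formula n, IsUI L P p φ ψ

/-! ### Canonical formulas -/

/-- Big conjunction of a list of formulas (`⊤` for the empty list). -/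
def bigAnd {n : ℕ} : List (Formula n) → Formula n
  | [] => .top
  | φ :: l => .and φ (bigAnd l)

/-- Big disjunction of a list of formulas (`⊥` for the empty list). -/
def bigOr {n : ℕ} : List (Formula n) → Formula n
  | [] => .bot
  | φ :: l => .or φ (bigOr l)

/-- An injective numerical code of formulas, used to fix a canonical ordering. -/
def fcode {n : ℕ} : Formula n → ℕ
  | .top => Nat.pair 0 0
  | .bot => Nat.pair 1 0
  | .atom q => Nat.pair 2 q
  | .neg φ => Nat.pair 3 (fcode φ)
  | .and φ ψ => Nat.pair 4 (Nat.pair (fcode φ) (fcode ψ))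
  | .or φ ψ => Nat.pair 5 (Nat.pair (fcode φ) (fcode ψ))
  | .D B φ => Nat.pair 6 (Nat.pair (B.1.sum fun i => 2 ^ (i : ℕ)) (fcode φ))

/-- Insert a formula into a strictly `fcode`-sorted list (dropping duplicates). -/
def insertF {n : ℕ} (φ : Formula n) : List (Formula n) → List (Formula n)
  | [] => [φ]
  | ψ :: l =>
      if fcode φ < fcode ψ then φ :: ψ :: l
      else if fcode φ = fcode ψ then ψ :: l
      else ψ :: insertF φ l

/-- The canonical (sorted, duplicate-free) list representing the set of formulas in `l`. -/
def normList {n : ℕ} (l : List (Formula n)) : List (Formula n) := l.foldr insertF []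

/-- The minterm of `P` that is positive exactly on `S`. -/
def minterm {n : ℕ} (P S : Finset ℕ) : Formula n :=
  bigAnd ((P.sort (· ≤ ·)).map fun q =>
    if q ∈ S then Formula.atom q else Formula.neg (Formula.atom q))

/-- The subset of `Fin n` whose characteristic bits are those of `m`. -/
def natToFinset (n m : ℕ) : Finset (Fin n) :=
  Finset.univ.filter fun i => m.testBit (i : ℕ)

/-- A canonical enumeration of all nonempty subsets of the agent set. -/
def neSubsets (n : ℕ) : List {B : Finset (Fin n) // B.Nonempty} :=
  ((List.range (2 ^ n)).map (natToFinset n)).filterMap fun B =>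
    if h : B.Nonempty then some ⟨B, h⟩ else none

/-- `∇_B Φ = D_B (⋁Φ) ∧ ⋀_{φ ∈ Φ} ¬ D_B ¬ φ`. -/
def nabla {n : ℕ} (B : {B : Finset (Fin n) // B.Nonempty}) (Φ : List (Formula n)) : Formula n :=
  Formula.and (Formula.D B (bigOr Φ))
    (bigAnd (Φ.map fun φ => Formula.neg (Formula.D B (Formula.neg φ))))

/-- Underlying data of a d-canonical formula: a set of (positive) atoms together with,
for every set `B` of agents, a list of successor data. -/
inductive CData (n : ℕ) : Type
  | mk (S : Finset ℕ) (succ : Finset (Fin n) → List (CData n)) : CData n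

/-- The positive-atom component. -/
def CData.S {n : ℕ} : CData n → Finset ℕ
  | mk S _ => S

/-- The `B`-successor data. -/
def CData.succ {n : ℕ} : CData n → Finset (Fin n) → List (CData n)
  | mk _ f => f

/-- The d-canonical formula of depth `k` over `P` determined by the data `d`:
`δ_0 ∧ ⋀_{B} ∇_B Φ_B`. -/
def toFormula {n : ℕ} (P : Finset ℕ) : ℕ → CData n → Formula n
  | 0, d => minterm P (d.S ∩ P)
  | (k+1), d =>
      Formula.and (minterm P (d.S ∩ P))
        (bigAnd ((neSubsets n).map fun B =>
          nabla B (normList ((d.succ B.1).map fun c => toFormula P k c))))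

/-- `D^P_k`: the set of d-canonical formulas of depth `k` over `P`. -/
def DP {n : ℕ} (P : Finset ℕ) (k : ℕ) : Set (Formula n) := Set.range (toFormula P k)

/-- `R_B(δ)` for `δ` the level-`k` canonical formula with data `d`:
the set of `B`-successor canonical formulas (of level `k - 1`). -/
def RBset {n : ℕ} (P : Finset ℕ) (k : ℕ) (d : CData n) (B : Finset (Fin n)) :
    Set (Formula n) :=
  {φ | ∃ c ∈ d.succ B, φ = toFormula P (k - 1) c}

/-- One pruning step `δ ↦ δ^↓` on data (first argument: the level of the input). -/
def downD {n : ℕ} : ℕ → CData n → CData n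
  | 0, d => d
  | 1, d => CData.mk d.S (fun _ => [])
  | (k+2), d => CData.mk d.S (fun B => (d.succ B).map fun c => downD (k+1) c)

/-- `l`-fold pruning `δ ↦ δ^{↓l}` on data (first argument: the level of the input). -/
def downIter {n : ℕ} : ℕ → ℕ → CData n → CData n
  | _, 0, d => d
  | k, (l+1), d => downIter (k-1) l (downD k d)

/-- Truncation `δ ↦ δ^{↑l}` on data (first argument: the level of the input). -/
def upD {n : ℕ} : ℕ → ℕ → CData n → CData n
  | _, 0, d => CData.mk d.S (fun _ => [])
  | 0, (_+1), d => d
  | (k+1), (l+1), d => CData.mk d.S (fun B => (d.succ B).map fun c => upD k l c)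

/-- The canonical formula `δ` of level `k` with data `d`. -/
def cf {n : ℕ} (P : Finset ℕ) (k : ℕ) (d : CData n) : Formula n := toFormula P k d

/-- `δ^{↓l}` (a canonical formula of level `k - l`). -/
def cfDown {n : ℕ} (P : Finset ℕ) (k l : ℕ) (d : CData n) : Formula n :=
  toFormula P (k - l) (downIter k l d)

/-- `δ^{↑l}` (a canonical formula of level `min k l`). -/
def cfUp {n : ℕ} (P : Finset ℕ) (k l : ℕ) (d : CData n) : Formula n :=
  toFormula P (min k l) (upD k l d)

/-- Literal elimination: `φ^p` replaces every occurrence of `¬p` by `⊤` and subsequently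
every remaining occurrence of `p` by `⊤`. -/
def elim {n : ℕ} (p : ℕ) : Formula n → Formula n
  | .top => .top
  | .bot => .bot
  | .atom q => if q = p then .top else .atom q
  | .neg (.atom q) => if q = p then .top else .neg (.atom q)
  | .neg φ => .neg (elim p φ)
  | .and φ ψ => .and (elim p φ) (elim p ψ)
  | .or φ ψ => .or (elim p φ) (elim p ψ)
  | .D B φ => .D B (elim p φ)


/-! ### Auxiliary development -/

section Aux

variable {n : ℕ}

lemma sum_range_two_pow (a : ℕ) : (∑ i ∈ Finset.range a, 2 ^ i) + 1 = 2 ^ a := by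
  induction a with
  | zero => simp
  | succ a iha =>
    rw [Finset.sum_range_succ]
    have := Nat.pow_pos (n := a) (by norm_num : 0 < 2)
    omega

open Finset in
/-- Sums of distinct powers of two: bit characterization. -/
lemma testBit_sum_two_pow (B : Finset ℕ) (j : ℕ) :
    (∑ i ∈ B, 2 ^ i).testBit j = true ↔ j ∈ B := by
  induction B using Finset.induction_on_max with
  | empty => simp [Nat.zero_testBit]
  | insert a s ha ih =>
    have hanotmem : a ∉ s := fun h => lt_irrefl a (ha a h)
    rw [Finset.sum_insert hanotmem]
    have hslt : (∑ i ∈ s, 2 ^ i) < 2 ^ a := by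
      have hsub : s ⊆ Finset.range a := fun x hx => Finset.mem_range.2 (ha x hx)
      have h1 : (∑ i ∈ s, 2 ^ i) ≤ ∑ i ∈ Finset.range a, 2 ^ i :=
        Finset.sum_le_sum_of_subset hsub
      have h2 := sum_range_two_pow a
      omega
    rcases lt_trichotomy j a with hja | rfl | hja
    · rw [Nat.testBit_two_pow_add_gt hja, ih]
      simp only [Finset.mem_insert]
      exact ⟨Or.inr, fun h => h.resolve_left (by omega)⟩
    · rw [Nat.testBit_two_pow_add_eq,
        Nat.testBit_eq_false_of_lt hslt]
      simp
    · have hlt : 2 ^ a + (∑ i ∈ s, 2 ^ i) < 2 ^ j := by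
        have : 2 ^ a + (∑ i ∈ s, 2 ^ i) < 2 ^ (a + 1) := by
          rw [pow_succ]; omega
        exact lt_of_lt_of_le this (Nat.pow_le_pow_right (by norm_num) hja)
      rw [Nat.testBit_eq_false_of_lt hlt]
      simp only [Bool.false_eq_true, false_iff, Finset.mem_insert, not_or]
      exact ⟨by omega, fun h => absurd (ha j h) (by omega)⟩

lemma sum_two_pow_fin_eq (B : Finset (Fin n)) :
    (∑ i ∈ B, 2 ^ (i : ℕ)) = ∑ m ∈ B.image (fun i : Fin n => (i : ℕ)), 2 ^ m := by
  rw [Finset.sum_image (fun x _ y _ h => Fin.val_injective h)]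

lemma testBit_sum_two_pow_fin (B : Finset (Fin n)) (j : ℕ) :
    (∑ i ∈ B, 2 ^ (i : ℕ)).testBit j = true ↔ ∃ i ∈ B, (i : ℕ) = j := by
  rw [sum_two_pow_fin_eq, testBit_sum_two_pow]
  simp [Finset.mem_image]

lemma sum_two_pow_fin_lt (B : Finset (Fin n)) : (∑ i ∈ B, 2 ^ (i : ℕ)) < 2 ^ n := by
  by_contra h
  push_neg at h
  -- then some bit ≥ n would need to be set; easier: bound via subset of range n
  rw [sum_two_pow_fin_eq] at h
  have hsub : B.image (fun i : Fin n => (i : ℕ)) ⊆ Finset.range n := by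
    intro x hx
    rcases Finset.mem_image.1 hx with ⟨i, _, rfl⟩
    exact Finset.mem_range.2 i.isLt
  have h1 : (∑ m ∈ B.image (fun i : Fin n => (i : ℕ)), 2 ^ m)
      ≤ ∑ m ∈ Finset.range n, 2 ^ m := Finset.sum_le_sum_of_subset hsub
  have h2 := sum_range_two_pow n
  omega

lemma natToFinset_sum_two_pow (B : Finset (Fin n)) :
    natToFinset n (∑ i ∈ B, 2 ^ (i : ℕ)) = B := by
  ext i
  simp only [natToFinset, Finset.mem_filter, Finset.mem_univ, true_and]
  rw [testBit_sum_two_pow_fin]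
  constructor
  · rintro ⟨i', hi', h⟩
    rwa [show i' = i from Fin.val_injective h] at hi'
  · intro h; exact ⟨i, h, rfl⟩

lemma sum_two_pow_fin_injective :
    Function.Injective (fun B : Finset (Fin n) => ∑ i ∈ B, 2 ^ (i : ℕ)) := by
  intro B B' h
  dsimp only at h
  have h1 := natToFinset_sum_two_pow (n := n) B
  rw [h, natToFinset_sum_two_pow] at h1
  exact h1.symm

/-- Every nonempty subset of agents occurs in the canonical enumeration. -/
lemma mem_neSubsets (B : {B : Finset (Fin n) // B.Nonempty}) : B ∈ neSubsets n := by
  rw [neSubsets, List.mem_filterMap]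
  refine ⟨B.1, ?_, ?_⟩
  · rw [List.mem_map]
    exact ⟨∑ i ∈ B.1, 2 ^ (i : ℕ),
      List.mem_range.2 (sum_two_pow_fin_lt B.1), natToFinset_sum_two_pow B.1⟩
  · rw [dif_pos B.2]

/-- Injectivity of the formula code. -/
lemma fcode_injective : ∀ φ ψ : Formula n, fcode φ = fcode ψ → φ = ψ := by
  intro φ
  induction φ with
  | top => intro ψ h; cases ψ <;> simp [fcode, Nat.pair_eq_pair] at h <;> rfl
  | bot => intro ψ h; cases ψ <;> simp [fcode, Nat.pair_eq_pair] at h <;> rfl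
  | atom q =>
    intro ψ h
    cases ψ <;> simp [fcode, Nat.pair_eq_pair] at h
    rw [h]
  | neg φ ih =>
    intro ψ h
    cases ψ <;> simp [fcode, Nat.pair_eq_pair] at h
    rw [ih _ h]
  | and φ₁ φ₂ ih₁ ih₂ =>
    intro ψ h
    cases ψ <;> simp [fcode, Nat.pair_eq_pair] at h
    rw [ih₁ _ h.1, ih₂ _ h.2]
  | or φ₁ φ₂ ih₁ ih₂ =>
    intro ψ h
    cases ψ <;> simp [fcode, Nat.pair_eq_pair] at h
    rw [ih₁ _ h.1, ih₂ _ h.2]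
  | D B φ ih =>
    intro ψ h
    cases ψ <;> simp [fcode, Nat.pair_eq_pair] at h
    obtain ⟨h1, h2⟩ := h
    rw [ih _ h2]
    congr 1
    exact Subtype.ext (sum_two_pow_fin_injective h1)

/-! ### Sorted lists -/

lemma mem_insertF {φ ψ : Formula n} {l : List (Formula n)} :
    ψ ∈ insertF φ l ↔ ψ = φ ∨ ψ ∈ l := by
  induction l with
  | nil => simp [insertF]
  | cons a t ih =>
    rw [insertF]
    split_ifs with h1 h2
    · simp
    · have : φ = a := fcode_injective _ _ h2
      subst this
      simp only [List.mem_cons]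
      tauto
    · simp only [List.mem_cons, ih]
      tauto

lemma pairwise_insertF {φ : Formula n} {l : List (Formula n)}
    (h : l.Pairwise (fun a b => fcode a < fcode b)) :
    (insertF φ l).Pairwise (fun a b => fcode a < fcode b) := by
  induction l with
  | nil => simp [insertF]
  | cons a t ih =>
    rw [insertF]
    rcases List.pairwise_cons.1 h with ⟨ha, ht⟩
    split_ifs with h1 h2
    · exact List.pairwise_cons.2 ⟨by
        intro b hb
        rcases List.mem_cons.1 hb with rfl | hb
        · exact h1
        · exact lt_trans h1 (ha b hb), h⟩
    · exact h
    · refine List.pairwise_cons.2 ⟨?_, ih ht⟩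
      intro b hb
      rcases mem_insertF.1 hb with rfl | hb
      · omega
      · exact ha b hb

lemma pairwise_normList (l : List (Formula n)) :
    (normList l).Pairwise (fun a b => fcode a < fcode b) := by
  induction l with
  | nil => simp [normList]
  | cons a t ih => exact pairwise_insertF ih

lemma mem_normList {ψ : Formula n} {l : List (Formula n)} :
    ψ ∈ normList l ↔ ψ ∈ l := by
  induction l with
  | nil => simp [normList]
  | cons a t ih =>
    show ψ ∈ insertF a (normList t) ↔ _
    rw [mem_insertF, ih]
    simp

lemma sorted_eq_of_mem_iff : ∀ l₁ l₂ : List (Formula n),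
    l₁.Pairwise (fun a b => fcode a < fcode b) →
    l₂.Pairwise (fun a b => fcode a < fcode b) →
    (∀ x, x ∈ l₁ ↔ x ∈ l₂) → l₁ = l₂ := by
  intro l₁
  induction l₁ with
  | nil =>
    intro l₂ _ _ hmem
    cases l₂ with
    | nil => rfl
    | cons b t₂ => exact absurd ((hmem b).2 (List.mem_cons_self)) (List.not_mem_nil)
  | cons a t₁ ih =>
    intro l₂ h₁ h₂ hmem
    cases l₂ with
    | nil => exact absurd ((hmem a).1 (List.mem_cons_self)) (List.not_mem_nil)
    | cons b t₂ =>
      rcases List.pairwise_cons.1 h₁ with ⟨ha, ht₁⟩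
      rcases List.pairwise_cons.1 h₂ with ⟨hb, ht₂⟩
      have hab : a = b := by
        rcases List.mem_cons.1 ((hmem a).1 (List.mem_cons_self)) with h | h
        · exact h
        · rcases List.mem_cons.1 ((hmem b).2 (List.mem_cons_self)) with h' | h'
          · exact h'.symm
          · have := hb a h
            have := ha b h'
            omega
      subst hab
      have : t₁ = t₂ := by
        refine ih t₂ ht₁ ht₂ fun x => ⟨fun hx => ?_, fun hx => ?_⟩
        · rcases List.mem_cons.1 ((hmem x).1 (List.mem_cons_of_mem a hx)) with rfl | h
          · exact absurd (ha x hx) (lt_irrefl _)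
          · exact h
        · rcases List.mem_cons.1 ((hmem x).2 (List.mem_cons_of_mem a hx)) with rfl | h
          · exact absurd (hb x hx) (lt_irrefl _)
          · exact h
      rw [this]

lemma normList_eq_of_mem_iff {l₁ l₂ : List (Formula n)}
    (h : ∀ x, x ∈ l₁ ↔ x ∈ l₂) : normList l₁ = normList l₂ :=
  sorted_eq_of_mem_iff _ _ (pairwise_normList l₁) (pairwise_normList l₂)
    (fun x => by rw [mem_normList, mem_normList]; exact h x)

/-! ### Satisfaction lemmas -/

variable {W : Type} {M : KModel n W}

lemma sat_bigAnd {s : W} {l : List (Formula n)} :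
    Sat M s (bigAnd l) ↔ ∀ φ ∈ l, Sat M s φ := by
  induction l with
  | nil => simp [bigAnd, Sat]
  | cons a t ih => simp [bigAnd, Sat, ih]

lemma sat_bigOr {s : W} {l : List (Formula n)} :
    Sat M s (bigOr l) ↔ ∃ φ ∈ l, Sat M s φ := by
  induction l with
  | nil => simp [bigOr, Sat]
  | cons a t ih => simp [bigOr, Sat, ih]

lemma sat_minterm {s : W} {P S : Finset ℕ} :
    Sat M s (minterm P S) ↔ ∀ q ∈ P, (q ∈ S ↔ q ∈ M.V s) := by
  rw [minterm, sat_bigAnd]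
  constructor
  · intro h q hq
    have hmem : q ∈ P.sort (· ≤ ·) := (Finset.mem_sort _).2 hq
    have := h _ (List.mem_map_of_mem hmem)
    by_cases hS : q ∈ S <;> simp_all [Sat]
  · intro h ψ hψ
    rcases List.mem_map.1 hψ with ⟨q, hq, rfl⟩
    rw [Finset.mem_sort] at hq
    by_cases hS : q ∈ S <;> simp [Sat, hS] <;> [exact (h q hq).1 hS;
      exact fun hv => hS ((h q hq).2 hv)]

lemma minterm_arg_eq {s : W} {P A A' : Finset ℕ} (hA : A ⊆ P) (hA' : A' ⊆ P)
    (h : Sat M s (minterm P A)) (h' : Sat M s (minterm P A')) : A = A' := by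
  rw [sat_minterm] at h h'
  ext q
  constructor
  · intro hq
    exact (h' q (hA hq)).2 ((h q (hA hq)).1 hq)
  · intro hq
    exact (h q (hA' hq)).2 ((h' q (hA' hq)).1 hq)

/-- The first-conjunct valuation information of a canonical formula. -/
lemma sat_toFormula_atom {s : W} {P : Finset ℕ} {k : ℕ} {d : CData n}
    (h : Sat M s (toFormula P k d)) : ∀ q ∈ P, (q ∈ d.S ∩ P ↔ q ∈ M.V s) := by
  cases k with
  | zero => exact sat_minterm.1 h
  | succ k => exact sat_minterm.1 h.1


/-! ### Unfolding lemmas for `toFormula` at successor levels -/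

lemma toFormula_succ (P : Finset ℕ) (k : ℕ) (d : CData n) :
    toFormula P (k + 1) d =
      Formula.and (minterm P (d.S ∩ P))
        (bigAnd ((neSubsets n).map fun B =>
          nabla B (normList ((d.succ B.1).map fun c => toFormula P k c)))) := rfl

lemma sat_and_iff {s : W} {φ ψ : Formula n} :
    Sat M s (Formula.and φ ψ) ↔ Sat M s φ ∧ Sat M s ψ := Iff.rfl

lemma sat_nabla {s : W} {B : {B : Finset (Fin n) // B.Nonempty}} {l : List (Formula n)} :
    Sat M s (nabla B l) ↔
      ((∀ t, M.RB B.1 s t → ∃ χ ∈ l, Sat M t χ) ∧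
       (∀ χ ∈ l, ∃ t, M.RB B.1 s t ∧ Sat M t χ)) := by
  rw [nabla, sat_and_iff]
  constructor
  · rintro ⟨h1, h2⟩
    constructor
    · intro t ht
      exact sat_bigOr.1 (h1 t ht)
    · intro χ hχ
      have := sat_bigAnd.1 h2 _ (List.mem_map_of_mem hχ)
      simp only [Sat, not_forall, not_not] at this
      obtain ⟨t, ht, hsat⟩ := this
      exact ⟨t, ht, hsat⟩
  · rintro ⟨h1, h2⟩
    constructor
    · intro t ht
      exact sat_bigOr.2 (h1 t ht)
    · rw [sat_bigAnd]
      intro ψ hψ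
      rcases List.mem_map.1 hψ with ⟨χ, hχ, rfl⟩
      obtain ⟨t, ht, hsat⟩ := h2 χ hχ
      simp only [Sat, not_forall, not_not]
      exact ⟨t, ht, hsat⟩

/-- Satisfaction of a successor-level canonical formula, unpacked. -/
lemma sat_toFormula_succ_iff {s : W} {P : Finset ℕ} {k : ℕ} {d : CData n} :
    Sat M s (toFormula P (k + 1) d) ↔
      (Sat M s (minterm P (d.S ∩ P)) ∧
       ∀ B : {B : Finset (Fin n) // B.Nonempty}, B ∈ neSubsets n →
         Sat M s (nabla B (normList ((d.succ B.1).map fun c => toFormula P k c)))) := by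
  rw [toFormula_succ, sat_and_iff, sat_bigAnd]
  constructor
  · rintro ⟨h1, h2⟩
    exact ⟨h1, fun B hB => h2 _ (List.mem_map_of_mem hB)⟩
  · rintro ⟨h1, h2⟩
    refine ⟨h1, fun ψ hψ => ?_⟩
    rcases List.mem_map.1 hψ with ⟨B, hB, rfl⟩
    exact h2 B hB

/-! ### Finiteness of the set of canonical formulas -/

lemma finite_range_toFormula (P : Finset ℕ) (k : ℕ) :
    (Set.range (toFormula P k : CData n → Formula n)).Finite := by
  induction k with
  | zero =>
    apply Set.Finite.subset (((P.powerset : Finset (Finset ℕ)) : Set (Finset ℕ)).toFinite.image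
      (fun S => minterm (n := n) P S))
    rintro _ ⟨d, rfl⟩
    exact ⟨d.S ∩ P, by simp [Finset.mem_powerset], rfl⟩
  | succ k ih =>
    classical
    set Rk := ih.toFinset with hRk
    -- sorted lists over Rk
    set SL : Set (List (Formula n)) :=
      {l | l.Pairwise (fun a b => fcode a < fcode b) ∧
           ∀ x ∈ l, x ∈ Set.range (toFormula P k : CData n → Formula n)} with hSL
    have hSLfin : SL.Finite := by
      apply Set.Finite.of_finite_image (f := fun l : List (Formula n) => l.toFinset)
      · apply Set.Finite.subset ((Rk.powerset : Set (Finset (Formula n))).toFinite)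
        rintro T ⟨l, hl, rfl⟩
        dsimp only
        rw [Finset.mem_coe, Finset.mem_powerset]
        intro x hx
        rw [List.mem_toFinset] at hx
        rw [hRk, Set.Finite.mem_toFinset]
        exact hl.2 x hx
      · intro l₁ h₁ l₂ h₂ heq
        dsimp only at heq
        refine sorted_eq_of_mem_iff _ _ h₁.1 h₂.1 fun x => ?_
        rw [← List.mem_toFinset, heq, List.mem_toFinset]
    have hfuns : {f : {B : Finset (Fin n) // B.Nonempty} → List (Formula n) |
        ∀ B, f B ∈ SL}.Finite := by
      have := Set.Finite.pi (fun _ : {B : Finset (Fin n) // B.Nonempty} => hSLfin)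
      apply Set.Finite.subset this
      intro f hf
      intro B _
      exact hf B
    apply Set.Finite.subset
      ((((P.powerset : Finset (Finset ℕ)) : Set (Finset ℕ)).toFinite.prod hfuns).image
        (fun pr : Finset ℕ × ({B : Finset (Fin n) // B.Nonempty} → List (Formula n)) =>
          Formula.and (minterm P pr.1)
            (bigAnd ((neSubsets n).map fun B => nabla B (pr.2 B)))))
    rintro _ ⟨d, rfl⟩
    refine ⟨(d.S ∩ P, fun B => normList ((d.succ B.1).map fun c => toFormula P k c)),
      ⟨?_, ?_⟩, ?_⟩
    · simp [Finset.mem_powerset]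
    · intro B
      refine ⟨pairwise_normList _, fun x hx => ?_⟩
      rcases List.mem_map.1 (mem_normList.1 hx) with ⟨c, _, rfl⟩
      exact Set.mem_range_self c
    · exact (toFormula_succ P k d).symm

/-! ### Existence of a canonical description -/

lemma exists_cdata (P : Finset ℕ) (k : ℕ) {W : Type} (M : KModel n W) :
    ∀ s : W, ∃ d : CData n, Sat M s (toFormula P k d) := by
  classical
  induction k with
  | zero =>
    intro s
    refine ⟨CData.mk (P.filter (fun q => q ∈ M.V s)) (fun _ => []), ?_⟩
    show Sat M s (minterm P _)
    rw [sat_minterm]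
    intro q hq
    simp [CData.S, Finset.mem_filter, hq]
  | succ k ih =>
    intro s
    choose f hf using ih
    -- inverse of toFormula on its range
    have hinv : ∀ χ ∈ Set.range (toFormula P k : CData n → Formula n),
        ∃ c : CData n, toFormula P k c = χ := fun χ h => h
    set g : Formula n → CData n := fun χ =>
      if h : ∃ c : CData n, toFormula P k c = χ then h.choose
      else CData.mk ∅ (fun _ => []) with hg
    have hginv : ∀ χ ∈ Set.range (toFormula P k : CData n → Formula n),
        toFormula P k (g χ) = χ := by
      intro χ hχ
      rcases hχ with ⟨c, rfl⟩
      rw [hg]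
      simp only
      rw [dif_pos ⟨c, rfl⟩]
      exact (⟨c, rfl⟩ : ∃ c', toFormula P k c' = toFormula P k c).choose_spec
    -- the set of formulas realized at B-successors
    set SB : Finset (Fin n) → Set (Formula n) :=
      fun B => (fun t => toFormula P k (f t)) '' {t | M.RB B s t} with hSB
    have hSBfin : ∀ B, (SB B).Finite := by
      intro B
      apply Set.Finite.subset (finite_range_toFormula P k)
      rintro _ ⟨t, _, rfl⟩
      exact Set.mem_range_self _
    set d : CData n := CData.mk (P.filter (fun q => q ∈ M.V s))
      (fun B => ((hSBfin B).toFinset.toList).map g) with hd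
    refine ⟨d, ?_⟩
    rw [sat_toFormula_succ_iff]
    constructor
    · rw [sat_minterm]
      intro q hq
      simp [hd, CData.S, Finset.mem_filter, hq]
    · intro B _
      -- membership in the normalized successor list
      have hmem : ∀ χ : Formula n,
          χ ∈ normList ((d.succ B.1).map fun c => toFormula P k c) ↔ χ ∈ SB B.1 := by
        intro χ
        rw [mem_normList, List.mem_map]
        constructor
        · rintro ⟨c, hc, rfl⟩
          simp only [hd, CData.succ, List.mem_map] at hc
          rcases hc with ⟨χ', hχ', rfl⟩
          rw [Finset.mem_toList, Set.Finite.mem_toFinset] at hχ'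
          rw [hginv χ' (by rcases hχ' with ⟨t, _, rfl⟩; exact Set.mem_range_self _)]
          exact hχ'
        · intro hχ
          refine ⟨g χ, ?_, ?_⟩
          · simp only [hd, CData.succ, List.mem_map]
            exact ⟨χ, by rw [Finset.mem_toList, Set.Finite.mem_toFinset]; exact hχ, rfl⟩
          · exact hginv χ (by rcases hχ with ⟨t, _, rfl⟩; exact Set.mem_range_self _)
      rw [sat_nabla]
      constructor
      · intro t ht
        exact ⟨toFormula P k (f t), (hmem _).2 ⟨t, ht, rfl⟩, hf t⟩
      · intro χ hχ
        rcases (hmem χ).1 hχ with ⟨t, ht, rfl⟩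
        exact ⟨t, ht, hf t⟩

/-! ### Uniqueness of the satisfied canonical formula -/

lemma unique_cf (P : Finset ℕ) : ∀ (k : ℕ) {W : Type} (M : KModel n W) (s : W)
    (d d' : CData n), Sat M s (toFormula P k d) → Sat M s (toFormula P k d') →
    toFormula P k d = toFormula P k d' := by
  intro k
  induction k with
  | zero =>
    intro W M s d d' h h'
    show minterm P (d.S ∩ P) = minterm (n := n) P (d'.S ∩ P)
    rw [minterm_arg_eq (Finset.inter_subset_right) (Finset.inter_subset_right) h h']
  | succ k ih =>
    intro W M s d d' h h'
    rw [sat_toFormula_succ_iff] at h h'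
    rw [toFormula_succ, toFormula_succ]
    have hmint : d.S ∩ P = d'.S ∩ P :=
      minterm_arg_eq (Finset.inter_subset_right) (Finset.inter_subset_right) h.1 h'.1
    rw [hmint]
    congr 1
    congr 1
    apply List.map_congr_left
    intro B hB
    have hnd := h.2 B hB
    have hnd' := h'.2 B hB
    rw [sat_nabla] at hnd hnd'
    congr 1
    apply sorted_eq_of_mem_iff _ _ (pairwise_normList _) (pairwise_normList _)
    intro χ
    constructor
    · intro hχ
      obtain ⟨t, ht, hsat⟩ := hnd.2 χ hχ
      obtain ⟨χ', hχ', hsat'⟩ := hnd'.1 t ht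
      rcases List.mem_map.1 (mem_normList.1 hχ) with ⟨c, _, rfl⟩
      rcases List.mem_map.1 (mem_normList.1 hχ') with ⟨c', hc', rfl⟩
      rw [ih M t c c' hsat hsat']
      exact hχ'
    · intro hχ
      obtain ⟨t, ht, hsat⟩ := hnd'.2 χ hχ
      obtain ⟨χ', hχ', hsat'⟩ := hnd.1 t ht
      rcases List.mem_map.1 (mem_normList.1 hχ) with ⟨c, _, rfl⟩
      rcases List.mem_map.1 (mem_normList.1 hχ')  with ⟨c', hc', rfl⟩
      rw [ih M t c c' hsat hsat']
      exact hχ'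

/-! ### Canonical formulas decide all formulas of bounded depth -/

lemma agree (P : Finset ℕ) : ∀ (φ : Formula n) (k : ℕ), φ.depth ≤ k → φ.atoms ⊆ P →
    ∀ (d : CData n) (W W' : Type) (M : KModel n W) (M' : KModel n W') (s : W) (s' : W'),
    Sat M s (toFormula P k d) → Sat M' s' (toFormula P k d) →
    (Sat M s φ ↔ Sat M' s' φ) := by
  intro φ
  induction φ with
  | top => intro k _ _ d W W' M M' s s' _ _; simp [Sat]
  | bot => intro k _ _ d W W' M M' s s' _ _; simp [Sat]
  | atom q =>
    intro k _ hatoms d W W' M M' s s' h h'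
    have hq : q ∈ P := hatoms (by simp [Formula.atoms])
    have h1 := sat_toFormula_atom h q hq
    have h2 := sat_toFormula_atom h' q hq
    show q ∈ M.V s ↔ q ∈ M'.V s'
    rw [← h1, h2]
  | neg ψ ih =>
    intro k hdep hatoms d W W' M M' s s' h h'
    show ¬ _ ↔ ¬ _
    rw [ih k hdep hatoms d W W' M M' s s' h h']
  | and ψ₁ ψ₂ ih₁ ih₂ =>
    intro k hdep hatoms d W W' M M' s s' h h'
    rw [Formula.depth, max_le_iff] at hdep
    rw [Formula.atoms, Finset.union_subset_iff] at hatoms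
    show _ ∧ _ ↔ _ ∧ _
    rw [ih₁ k hdep.1 hatoms.1 d W W' M M' s s' h h',
      ih₂ k hdep.2 hatoms.2 d W W' M M' s s' h h']
  | or ψ₁ ψ₂ ih₁ ih₂ =>
    intro k hdep hatoms d W W' M M' s s' h h'
    rw [Formula.depth, max_le_iff] at hdep
    rw [Formula.atoms, Finset.union_subset_iff] at hatoms
    show _ ∨ _ ↔ _ ∨ _
    rw [ih₁ k hdep.1 hatoms.1 d W W' M M' s s' h h',
      ih₂ k hdep.2 hatoms.2 d W W' M M' s s' h h']
  | D B ψ ih =>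
    intro k hdep hatoms d W W' M M' s s' h h'
    rw [Formula.depth] at hdep
    obtain ⟨k', rfl⟩ : ∃ k', k = k' + 1 := ⟨k - 1, by omega⟩
    have hdep' : ψ.depth ≤ k' := by omega
    have key : ∀ (W W' : Type) (M : KModel n W) (M' : KModel n W') (s : W) (s' : W'),
        Sat M s (toFormula P (k' + 1) d) → Sat M' s' (toFormula P (k' + 1) d) →
        Sat M s (Formula.D B ψ) → Sat M' s' (Formula.D B ψ) := by
      intro W W' M M' s s' h h' hD t' ht'
      rw [sat_toFormula_succ_iff] at h h'
      have hnd := h.2 B (mem_neSubsets B)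
      have hnd' := h'.2 B (mem_neSubsets B)
      rw [sat_nabla] at hnd hnd'
      obtain ⟨χ, hχ, hsat'⟩ := hnd'.1 t' ht'
      obtain ⟨t, ht, hsat⟩ := hnd.2 χ hχ
      rcases List.mem_map.1 (mem_normList.1 hχ) with ⟨c, _, rfl⟩
      exact (ih k' hdep' hatoms c W W' M M' t t' hsat hsat').1 (hD t ht)
    exact ⟨key W W' M M' s s' h h', key W' W M' M s' s h' h⟩

end Aux


/-- every formula is `L`-equivalent to the disjunction of a unique set of
`L`-satisfiable d-canonical formulas of any depth `k ≥ dep(φ)` over its atoms. -/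
theorem unique_canonical_disjunction {n : ℕ} (L : MSys) (φ : Formula n) (k : ℕ)
    (hk : φ.depth ≤ k) :
    ∃! Φ : Finset (Formula n),
      (↑Φ ⊆ {δ : Formula n | δ ∈ DP φ.atoms k ∧ SatL L δ}) ∧
      EquivL L φ (bigOr Φ.toList) := by
  classical
  set P := φ.atoms with hP
  have hfin : {δ : Formula n | δ ∈ Set.range (toFormula P k : CData n → Formula n) ∧
      SatL L (Formula.and δ φ)}.Finite :=
    (finite_range_toFormula P k).subset (fun δ h => h.1)
  set Φ : Finset (Formula n) := hfin.toFinset with hΦ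
  have hmemΦ : ∀ δ : Formula n, δ ∈ Φ ↔
      (δ ∈ Set.range (toFormula P k : CData n → Formula n) ∧
        SatL L (Formula.and δ φ)) := fun δ => Set.Finite.mem_toFinset hfin
  refine ⟨Φ, ⟨?_, ?_, ?_⟩, ?_⟩
  · -- Φ consists of L-satisfiable canonical formulas
    intro δ hδ
    rw [Finset.mem_coe, hmemΦ] at hδ
    obtain ⟨hr, W, M, s, hM, hsat⟩ := hδ
    exact ⟨hr, W, M, s, hM, (sat_and_iff.1 hsat).1⟩
  · -- φ entails the disjunction
    intro W M hM s hs
    obtain ⟨d, hd⟩ := exists_cdata P k M s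
    rw [sat_bigOr]
    exact ⟨toFormula P k d,
      Finset.mem_toList.2 ((hmemΦ _).2 ⟨Set.mem_range_self d,
        ⟨W, M, s, hM, sat_and_iff.2 ⟨hd, hs⟩⟩⟩), hd⟩
  · -- the disjunction entails φ
    intro W M hM s hs
    rw [sat_bigOr] at hs
    obtain ⟨δ, hδl, hδ⟩ := hs
    rw [Finset.mem_toList, hmemΦ] at hδl
    obtain ⟨⟨d, rfl⟩, W', M', s', hM', hsat'⟩ := hδl
    have h2 := sat_and_iff.1 hsat'
    exact (agree P φ k hk (Finset.Subset.refl _) d W W' M M' s s' hδ h2.1).2 h2.2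
  · -- uniqueness
    rintro Φ' ⟨hsub', hequiv'⟩
    apply Finset.ext
    intro δ
    constructor
    · intro hδ'
      have hd := hsub' (Finset.mem_coe.2 hδ')
      obtain ⟨hr, W, M, s, hM, hsat⟩ := hd
      have hφ : Sat M s φ :=
        hequiv'.2 W M hM s (sat_bigOr.2 ⟨δ, Finset.mem_toList.2 hδ', hsat⟩)
      rw [hmemΦ]
      exact ⟨hr, W, M, s, hM, sat_and_iff.2 ⟨hsat, hφ⟩⟩
    · intro hδ
      rw [hmemΦ] at hδ
      obtain ⟨⟨d, rfl⟩, W, M, s, hM, hsat⟩ := hδ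
      have h1 := sat_and_iff.1 hsat
      have hs' : Sat M s (bigOr Φ'.toList) := hequiv'.1 W M hM s h1.2
      rw [sat_bigOr] at hs'
      obtain ⟨δ', hδ'l, hδ'⟩ := hs'
      rw [Finset.mem_toList] at hδ'l
      have hr' := hsub' (Finset.mem_coe.2 hδ'l)
      obtain ⟨⟨d', rfl⟩, -⟩ := hr'
      rw [unique_cf P k M s d d' h1.1 hδ']
      exact hδ'l

end DKLogic
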